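/- Let G act translatively on a poset P with P/G a poset, and let f: P → P/G be the quotient map. Then for every X ∈ P/G, the preimage f^{-1}((P/G)_{≥X}) is the disjoint union over x ∈ f^{-1}(X) of the upper sets P_{≥x}. -/
import Mathlib


/-- Let `G` act translatively on a poset `P` with `P/G` a poset, and let
`f : P → P/G` be the quotient map. For every orbit `X = Gp`, the preimage
`f⁻¹((P/G)_{≥X}) = {z | ∃ g, g • p ≤ z}` is the disjoint union of the upper sets `P_{≥x}`
over the representatives `x ∈ X`. -/
theorem translative_quotient_upper_fiber_decomposition
    {G P : Type*} [Group G] [PartialOrder P] [MulAction G P]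
    (hact : ∀ (g : G) (x y : P), x ≤ y ↔ g • x ≤ g • y)
    (htrans : ∀ (p : P) (g : G), (∃ u : P, p ≤ u ∧ g • p ≤ u) → g • p = p)
    (hposet : ∀ p q : P, (∃ g : G, g • p ≤ q) → (∃ g : G, g • q ≤ p) → ∃ g : G, g • p = q)
    (p : P) :
    ({z : P | ∃ g : G, g • p ≤ z} = ⋃ x ∈ MulAction.orbit G p, Set.Ici x) ∧
    (MulAction.orbit G p).PairwiseDisjoint (fun x => Set.Ici x) := by
  constructor
  · ext z
    simp only [Set.mem_setOf_eq, Set.mem_iUnion, Set.mem_Ici, MulAction.mem_orbit_iff]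
    constructor
    · rintro ⟨g, hg⟩
      exact ⟨g • p, ⟨g, rfl⟩, hg⟩
    · rintro ⟨x, ⟨g, rfl⟩, hx⟩
      exact ⟨g, hx⟩
  · rintro x ⟨g, rfl⟩ y ⟨h, rfl⟩ hne
    refine Set.disjoint_left.2 fun z hz hz' => hne ?_
    have key : (g * h⁻¹) • (h • p) = h • p :=
      htrans (h • p) (g * h⁻¹) ⟨z, hz', by
        rwa [mul_smul, inv_smul_smul]⟩
    rw [mul_smul, inv_smul_smul] at key
    exact key
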